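/- (Proposition 4.1, case T_{4,4,4}) The monodromy matrix A_{4,4,4} = [[21,-8],[8,-3]] of the link of the cusp singularity T_{4,4,4} is conjugate in SL(2, ℤ) to its own inverse: there exists P in SL(2, ℤ) with P * A_{4,4,4} * P⁻¹ = A_{4,4,4}⁻¹. -/

import Mathlib

/-- The monodromy matrix `A_{4,4,4} = [[21,-8],[8,-3]]` of the link of the
cusp singularity `T_{4,4,4}`, as an element of `SL(2, ℤ)`. -/
def A444 : Matrix.SpecialLinearGroup (Fin 2) ℤ :=
  ⟨!![21, -8; 8, -3], by norm_num [Matrix.det_fin_two_of]⟩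

/-- (Proposition 4.1, case `T_{4,4,4}`) The monodromy matrix `A_{4,4,4}` is
conjugate in `SL(2, ℤ)` to its own inverse. -/
theorem A444_conj_inv :
    ∃ P : Matrix.SpecialLinearGroup (Fin 2) ℤ, P * A444 * P⁻¹ = A444⁻¹ := by
  refine ⟨(show Matrix.SpecialLinearGroup (Fin 2) ℤ from ⟨!![1, -1; 2, -1], by norm_num [Matrix.det_fin_two_of]⟩), ?_⟩
  rw [mul_inv_eq_iff_eq_mul]
  ext i j
  rw [Matrix.SpecialLinearGroup.coe_mul, Matrix.SpecialLinearGroup.coe_mul, Matrix.SpecialLinearGroup.coe_inv]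
  simp only [Matrix.SpecialLinearGroup.coe_mul, Matrix.SpecialLinearGroup.coe_inv, Matrix.adjugate_fin_two, A444]
  fin_cases i <;> fin_cases j <;>
    simp [Matrix.mul_apply, Fin.sum_univ_succ]
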